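/- arXiv:1209.0784 — 2 statements merged into one kernel-verified Lean document; each statement's English description precedes it below -/
import Mathlib

section
/- Let $K_0 > 0$ and suppose $y = (y_1, y_2): [0,T) \to \mathbb{R}^2$ is a solution of $y_1' = \frac{y_2}{1-y_1} + b_1(t)$, $y_2' = y_1 + y_2 + b_2(t)$ with $|b_1(t)| \leq K_0$ and $|b_2(t)| \leq K_0$ a.e., such that $1 - \frac{1}{2K_0} < y_1(t) < 1$ and $y_2(t) > K_0 + \frac{1}{K_0} - 1$ for all $t \in [0,T)$ and $y_1(0) = y_1^0$. Then $y_1$ is nondecreasing on $[0,T)$ and $y_1(t) \geq 1 - \sqrt{(y_1^0 - 1)^2 - t}$ for all $t \in [0, \min\{T, (y_1^0-1)^2\})$; in particular if $y_1(t) \to 1$ as $t \to T$ then $T \leq (y_1^0 - 1)^2$. -/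
theorem stmt9 (K0 T y10 : ℝ) (hK0 : 0 < K0) (hT : 0 < T)
    (y1 y2 b1 b2 : ℝ → ℝ)
    (hb1 : ∀ t ∈ Set.Ico (0:ℝ) T, |b1 t| ≤ K0)
    (hb2 : ∀ t ∈ Set.Ico (0:ℝ) T, |b2 t| ≤ K0)
    (hderiv1 : ∀ t ∈ Set.Ico (0:ℝ) T, HasDerivAt y1 (y2 t / (1 - y1 t) + b1 t) t)
    (hderiv2 : ∀ t ∈ Set.Ico (0:ℝ) T, HasDerivAt y2 (y1 t + y2 t + b2 t) t)
    (hbnd1 : ∀ t ∈ Set.Ico (0:ℝ) T, 1 - 1 / (2 * K0) < y1 t ∧ y1 t < 1)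
    (hbnd2 : ∀ t ∈ Set.Ico (0:ℝ) T, K0 + 1 / K0 - 1 < y2 t)
    (h0 : y1 0 = y10) :
    (∀ s ∈ Set.Ico (0:ℝ) T, ∀ t ∈ Set.Ico (0:ℝ) T, s ≤ t → y1 s ≤ y1 t) ∧
    (∀ t ∈ Set.Ico (0:ℝ) (min T ((y10 - 1)^2)),
      y1 t ≥ 1 - Real.sqrt ((y10 - 1)^2 - t)) ∧
    (Filter.Tendsto y1 (nhdsWithin T (Set.Iio T)) (nhds 1) → T ≤ (y10 - 1)^2) := by
  -- Key derivative lower bound : y1' ≥ 1/(2(1-y1))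
  have key : ∀ t ∈ Set.Ico (0:ℝ) T,
      1 / (2 * (1 - y1 t)) ≤ y2 t / (1 - y1 t) + b1 t := by
    intro t ht
    obtain ⟨h1, h2⟩ := hbnd1 t ht
    have h3 := hbnd2 t ht
    have hb' : -K0 ≤ b1 t := neg_le_of_abs_le (hb1 t ht)
    have he : 0 < 1 - y1 t := by linarith
    have he2 : 1 - y1 t < 1 / (2 * K0) := by linarith
    have hy2 : 1 ≤ y2 t := by
      have hq : 0 ≤ (K0 - 1)^2 / K0 := by positivity
      have hq2 : (K0 - 1)^2 / K0 = K0 + 1 / K0 - 2 := by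
        field_simp; ring
      linarith [hq2 ▸ hq]
    have hK : K0 * (1 / (2 * K0)) = 1 / 2 := by
      field_simp
    have h12 : (1:ℝ) / 2 ≤ y2 t + b1 t * (1 - y1 t) := by
      nlinarith [mul_le_mul_of_nonneg_right hb' he.le,
        mul_lt_mul_of_pos_left he2 hK0]
    have heq : (y2 t + b1 t * (1 - y1 t)) / (1 - y1 t) = y2 t / (1 - y1 t) + b1 t := by
      field_simp
    rw [← heq, div_le_div_iff₀ (by positivity) he]
    nlinarith [mul_le_mul_of_nonneg_left h12 (by linarith : (0:ℝ) ≤ 2 * (1 - y1 t))]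
  -- v(s) = (1 - y1 s)^2 + s
  have hvderiv : ∀ t ∈ Set.Ico (0:ℝ) T,
      HasDerivAt (fun s => (1 - y1 s)^2 + s)
        (2 * (1 - y1 t) * (-(y2 t / (1 - y1 t) + b1 t)) + 1) t := by
    intro t ht
    have h := hderiv1 t ht
    have h1 : HasDerivAt (fun s => 1 - y1 s) (-(y2 t / (1 - y1 t) + b1 t)) t := by
      exact ((hasDerivAt_const t (1:ℝ)).sub h).congr_deriv (by ring)
    have h2 := (h1.fun_pow 2).fun_add (hasDerivAt_id' t)
    refine h2.congr_deriv ?_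
    push_cast
    ring
  have h0mem : (0:ℝ) ∈ Set.Ico (0:ℝ) T := ⟨le_refl _, hT⟩
  have hvcont : ContinuousOn (fun s => (1 - y1 s)^2 + s) (Set.Ico 0 T) :=
    fun t ht => (hvderiv t ht).continuousAt.continuousWithinAt
  have hvdiff : DifferentiableOn ℝ (fun s => (1 - y1 s)^2 + s)
      (interior (Set.Ico 0 T)) := by
    rw [interior_Ico]
    exact fun t ht => (hvderiv t ⟨ht.1.le, ht.2⟩).differentiableAt.differentiableWithinAt
  have hanti : AntitoneOn (fun s => (1 - y1 s)^2 + s) (Set.Ico 0 T) := by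
    apply antitoneOn_of_deriv_nonpos (convex_Ico 0 T) hvcont hvdiff
    rw [interior_Ico]
    intro t ht
    have ht' : t ∈ Set.Ico (0:ℝ) T := ⟨ht.1.le, ht.2⟩
    rw [(hvderiv t ht').deriv]
    have he : 0 < 1 - y1 t := by linarith [(hbnd1 t ht').2]
    have h5 : 2 * (1 - y1 t) * (1 / (2 * (1 - y1 t))) = 1 := by field_simp
    nlinarith [mul_le_mul_of_nonneg_left (key t ht')
      (by linarith : (0:ℝ) ≤ 2 * (1 - y1 t))]
  -- main antitone inequality
  have hmain : ∀ t ∈ Set.Ico (0:ℝ) T, (1 - y1 t)^2 + t ≤ (y10 - 1)^2 := by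
    intro t ht
    have := hanti h0mem ht ht.1
    simp only [h0] at this
    nlinarith [this]
  -- monotonicity of y1
  have hmono : MonotoneOn y1 (Set.Ico 0 T) := by
    apply monotoneOn_of_deriv_nonneg (convex_Ico 0 T)
      (fun t ht => (hderiv1 t ht).continuousAt.continuousWithinAt)
      (by rw [interior_Ico]
          exact fun t ht => (hderiv1 t ⟨ht.1.le, ht.2⟩).differentiableAt.differentiableWithinAt)
    rw [interior_Ico]
    intro t ht
    have ht' : t ∈ Set.Ico (0:ℝ) T := ⟨ht.1.le, ht.2⟩
    rw [(hderiv1 t ht').deriv]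
    have he : 0 < 1 - y1 t := by linarith [(hbnd1 t ht').2]
    have : 0 < 1 / (2 * (1 - y1 t)) := by positivity
    linarith [key t ht']
  refine ⟨fun s hs t ht hst => hmono hs ht hst, ?_, ?_⟩
  · intro t ht
    have ht' : t ∈ Set.Ico (0:ℝ) T := ⟨ht.1, lt_of_lt_of_le ht.2 (min_le_left _ _)⟩
    have hm := hmain t ht'
    have hnn : 0 ≤ 1 - y1 t := by linarith [(hbnd1 t ht').2]
    have hsq : 1 - y1 t ≤ Real.sqrt ((y10 - 1)^2 - t) := by
      rw [← Real.sqrt_sq hnn]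
      exact Real.sqrt_le_sqrt (by linarith)
    linarith
  · intro _
    by_contra hc
    push_neg at hc
    have htm : (y10 - 1)^2 ∈ Set.Ico (0:ℝ) T := ⟨sq_nonneg _, hc⟩
    have hm := hmain _ htm
    nlinarith [(hbnd1 _ htm).2, sq_nonneg (1 - y1 ((y10 - 1)^2))]
end

section
/- Under the hypotheses of the coupled system above (i.e., $y_1' = \frac{1}{1-y_2} + b_1$, $y_2' = \frac{1}{1-y_1} + b_2$ with $|b_i| \leq K_0$, values of $y_1, y_2$ in $(1 - \frac{1}{2K_0}, 1)$, $T \leq \frac{1}{4K_0^2}$, and the integral bounds $\int_0^t \frac{d\tau}{1-y_i(\tau)} \leq \frac{3}{4K_0}$ for $i=1,2$), it holds for every $t \in [0,T)$ that $\frac{1 - y_2(t)}{1 - y_1(t)} \leq \frac{1 - y_2(0)}{1 - y_1(0)}\, e^{3/2}$ and $\frac{1 - y_1(t)}{1 - y_2(t)} \leq \frac{1 - y_1(0)}{1 - y_2(0)}\, e^{3/2}$. -/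
open Set MeasureTheory intervalIntegral

theorem aux14 (K0 T : ℝ) (hK0 : 0 < K0) (hT : 0 < T)
    (y1 y2 b1 b2 : ℝ → ℝ)
    (hb1 : ∀ t ∈ Ico (0:ℝ) T, |b1 t| ≤ K0)
    (hb2 : ∀ t ∈ Ico (0:ℝ) T, |b2 t| ≤ K0)
    (hpos1 : ∀ t ∈ Ico (0:ℝ) T, 0 < 1 - y1 t)
    (hpos2 : ∀ t ∈ Ico (0:ℝ) T, 0 < 1 - y2 t)
    (hderiv1 : ∀ t ∈ Ico (0:ℝ) T, HasDerivAt y1 (1 / (1 - y2 t) + b1 t) t)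
    (hderiv2 : ∀ t ∈ Ico (0:ℝ) T, HasDerivAt y2 (1 / (1 - y1 t) + b2 t) t)
    (hint1 : ∀ t ∈ Ico (0:ℝ) T, (∫ τ in (0:ℝ)..t, (1 - y1 τ)⁻¹) ≤ 3 / (4 * K0))
    (hint2 : ∀ t ∈ Ico (0:ℝ) T, (∫ τ in (0:ℝ)..t, (1 - y2 τ)⁻¹) ≤ 3 / (4 * K0)) :
    ∀ t ∈ Ico (0:ℝ) T,
      (1 - y2 t) / (1 - y1 t) ≤ (1 - y2 0) / (1 - y1 0) * Real.exp (3/2) := by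
  intro t ht
  have h0 : (0:ℝ) ∈ Ico (0:ℝ) T := ⟨le_refl 0, hT⟩
  -- continuity of the integrands on Ico 0 T
  have hc1 : ∀ x ∈ Ico (0:ℝ) T, ContinuousAt (fun u => (1 - y1 u)⁻¹) x := fun x hx =>
    (continuousAt_const.sub (hderiv1 x hx).continuousAt).inv₀ (ne_of_gt (hpos1 x hx))
  have hc2 : ∀ x ∈ Ico (0:ℝ) T, ContinuousAt (fun u => (1 - y2 u)⁻¹) x := fun x hx =>
    (continuousAt_const.sub (hderiv2 x hx).continuousAt).inv₀ (ne_of_gt (hpos2 x hx))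
  have hsub : Icc (0:ℝ) t ⊆ Ico (0:ℝ) T := fun x hx => ⟨hx.1, lt_of_le_of_lt hx.2 ht.2⟩
  have huIcc : uIcc (0:ℝ) t = Icc (0:ℝ) t := uIcc_of_le ht.1
  -- interval integrability on [0,t]
  have hii1 : ∀ s ∈ Icc (0:ℝ) t, IntervalIntegrable (fun u => (1 - y1 u)⁻¹) volume 0 s := by
    intro s hs
    apply ContinuousOn.intervalIntegrable
    intro x hx
    rw [uIcc_of_le hs.1] at hx
    exact (hc1 x (hsub ⟨hx.1, le_trans hx.2 hs.2⟩)).continuousWithinAt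
  have hii2 : ∀ s ∈ Icc (0:ℝ) t, IntervalIntegrable (fun u => (1 - y2 u)⁻¹) volume 0 s := by
    intro s hs
    apply ContinuousOn.intervalIntegrable
    intro x hx
    rw [uIcc_of_le hs.1] at hx
    exact (hc2 x (hsub ⟨hx.1, le_trans hx.2 hs.2⟩)).continuousWithinAt
  -- the auxiliary function
  set G : ℝ → ℝ := fun u => Real.log (1 - y2 u) - Real.log (1 - y1 u)
    - K0 * ((∫ τ in (0:ℝ)..u, (1 - y1 τ)⁻¹) + (∫ τ in (0:ℝ)..u, (1 - y2 τ)⁻¹)) with hGdef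
  -- derivative of G on the interior
  have hGderiv : ∀ x ∈ Ioo (0:ℝ) t, HasDerivAt G
      (b1 x / (1 - y1 x) - b2 x / (1 - y2 x) - K0 * ((1 - y1 x)⁻¹ + (1 - y2 x)⁻¹)) x := by
    intro x hx
    have hxm : x ∈ Ico (0:ℝ) T := hsub ⟨hx.1.le, hx.2.le⟩
    have hp : 0 < 1 - y1 x := hpos1 x hxm
    have hq : 0 < 1 - y2 x := hpos2 x hxm
    have hmeas1 : StronglyMeasurableAtFilter (fun u => (1 - y1 u)⁻¹) (nhds x) := by
      refine ContinuousOn.stronglyMeasurableAtFilter isOpen_Ioo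
        (fun z hz => (hc1 z (hsub ⟨hz.1.le, hz.2.le⟩)).continuousWithinAt) x hx
    have hmeas2 : StronglyMeasurableAtFilter (fun u => (1 - y2 u)⁻¹) (nhds x) := by
      refine ContinuousOn.stronglyMeasurableAtFilter isOpen_Ioo
        (fun z hz => (hc2 z (hsub ⟨hz.1.le, hz.2.le⟩)).continuousWithinAt) x hx
    have hI1 : HasDerivAt (fun u => ∫ τ in (0:ℝ)..u, (1 - y1 τ)⁻¹) ((1 - y1 x)⁻¹) x :=
      integral_hasDerivAt_right (hii1 x ⟨hx.1.le, hx.2.le⟩) hmeas1 (hc1 x hxm)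
    have hI2 : HasDerivAt (fun u => ∫ τ in (0:ℝ)..u, (1 - y2 τ)⁻¹) ((1 - y2 x)⁻¹) x :=
      integral_hasDerivAt_right (hii2 x ⟨hx.1.le, hx.2.le⟩) hmeas2 (hc2 x hxm)
    have hL2 : HasDerivAt (fun u => Real.log (1 - y2 u))
        ((0 - (1 / (1 - y1 x) + b2 x)) / (1 - y2 x)) x :=
      HasDerivAt.log ((hasDerivAt_const x (1:ℝ)).sub (hderiv2 x hxm)) (ne_of_gt hq)
    have hL1 : HasDerivAt (fun u => Real.log (1 - y1 u))
        ((0 - (1 / (1 - y2 x) + b1 x)) / (1 - y1 x)) x :=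
      HasDerivAt.log ((hasDerivAt_const x (1:ℝ)).sub (hderiv1 x hxm)) (ne_of_gt hp)
    have := ((hL2.sub hL1).sub ((hI1.add hI2).const_mul K0))
    refine this.congr_deriv ?_
    field_simp
    ring
  -- G is antitone on [0, t]
  have hGcont : ContinuousOn G (Icc 0 t) := by
    have hcq : ContinuousOn (fun u => Real.log (1 - y2 u)) (Icc 0 t) := by
      intro x hx
      have hf : ContinuousAt (fun u => (1:ℝ) - y2 u) x :=
        continuousAt_const.sub (hderiv2 x (hsub hx)).continuousAt
      exact (hf.log (ne_of_gt (hpos2 x (hsub hx)))).continuousWithinAt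
    have hcp : ContinuousOn (fun u => Real.log (1 - y1 u)) (Icc 0 t) := by
      intro x hx
      have hf : ContinuousAt (fun u => (1:ℝ) - y1 u) x :=
        continuousAt_const.sub (hderiv1 x (hsub hx)).continuousAt
      exact (hf.log (ne_of_gt (hpos1 x (hsub hx)))).continuousWithinAt
    have hP1 : ContinuousOn (fun u => ∫ τ in (0:ℝ)..u, (1 - y1 τ)⁻¹) (Icc 0 t) := by
      have : IntegrableOn (fun u => (1 - y1 u)⁻¹) (uIcc 0 t) volume := by
        rw [huIcc]
        exact ContinuousOn.integrableOn_Icc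
          (fun x hx => (hc1 x (hsub hx)).continuousWithinAt)
      have := continuousOn_primitive_interval (μ := volume) this
      rwa [huIcc] at this
    have hP2 : ContinuousOn (fun u => ∫ τ in (0:ℝ)..u, (1 - y2 τ)⁻¹) (Icc 0 t) := by
      have : IntegrableOn (fun u => (1 - y2 u)⁻¹) (uIcc 0 t) volume := by
        rw [huIcc]
        exact ContinuousOn.integrableOn_Icc
          (fun x hx => (hc2 x (hsub hx)).continuousWithinAt)
      have := continuousOn_primitive_interval (μ := volume) this
      rwa [huIcc] at this
    exact (hcq.sub hcp).sub (continuousOn_const.mul (hP1.add hP2))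
  have hanti : AntitoneOn G (Icc 0 t) := by
    apply antitoneOn_of_deriv_nonpos (convex_Icc 0 t) hGcont
    · intro x hx
      rw [interior_Icc] at hx
      exact (hGderiv x hx).differentiableAt.differentiableWithinAt
    · intro x hx
      rw [interior_Icc] at hx
      rw [(hGderiv x hx).deriv]
      have hxm : x ∈ Ico (0:ℝ) T := hsub ⟨hx.1.le, hx.2.le⟩
      have hp : 0 < 1 - y1 x := hpos1 x hxm
      have hq : 0 < 1 - y2 x := hpos2 x hxm
      have h1 := abs_le.mp (hb1 x hxm)
      have h2 := abs_le.mp (hb2 x hxm)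
      have e1 : b1 x / (1 - y1 x) ≤ K0 / (1 - y1 x) := (div_le_div_iff_of_pos_right hp).2 h1.2
      have e2 : -K0 / (1 - y2 x) ≤ b2 x / (1 - y2 x) := (div_le_div_iff_of_pos_right hq).2 h2.1
      rw [neg_div] at e2
      have e3 : K0 * ((1 - y1 x)⁻¹ + (1 - y2 x)⁻¹) = K0 / (1 - y1 x) + K0 / (1 - y2 x) := by
        field_simp
      linarith
  have hGle : G t ≤ G 0 := hanti (left_mem_Icc.2 ht.1) (right_mem_Icc.2 ht.1) ht.1
  -- unwind
  have hp0 : 0 < 1 - y1 0 := hpos1 0 h0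
  have hq0 : 0 < 1 - y2 0 := hpos2 0 h0
  have hpt : 0 < 1 - y1 t := hpos1 t ht
  have hqt : 0 < 1 - y2 t := hpos2 t ht
  have hIb : K0 * ((∫ τ in (0:ℝ)..t, (1 - y1 τ)⁻¹) + (∫ τ in (0:ℝ)..t, (1 - y2 τ)⁻¹))
      ≤ 3 / 2 := by
    have := hint1 t ht
    have := hint2 t ht
    have : (∫ τ in (0:ℝ)..t, (1 - y1 τ)⁻¹) + (∫ τ in (0:ℝ)..t, (1 - y2 τ)⁻¹)
        ≤ 3 / (2 * K0) := by
      have h34 : 3 / (4 * K0) + 3 / (4 * K0) = 3 / (2 * K0) := by field_simp; ring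
      linarith [hint1 t ht, hint2 t ht]
    calc K0 * ((∫ τ in (0:ℝ)..t, (1 - y1 τ)⁻¹) + (∫ τ in (0:ℝ)..t, (1 - y2 τ)⁻¹))
        ≤ K0 * (3 / (2 * K0)) := by
          exact mul_le_mul_of_nonneg_left this hK0.le
      _ = 3 / 2 := by field_simp
  have hlog : Real.log (1 - y2 t) - Real.log (1 - y1 t)
      ≤ Real.log (1 - y2 0) - Real.log (1 - y1 0) + 3 / 2 := by
    simp only [hGdef] at hGle
    simp only [intervalIntegral.integral_same] at hGle
    linarith
  have key : (1 - y2 t) / (1 - y1 t)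
      = Real.exp (Real.log (1 - y2 t) - Real.log (1 - y1 t)) := by
    rw [Real.exp_sub, Real.exp_log hqt, Real.exp_log hpt]
  rw [key]
  have key0 : (1 - y2 0) / (1 - y1 0) * Real.exp (3/2)
      = Real.exp (Real.log (1 - y2 0) - Real.log (1 - y1 0) + 3/2) := by
    rw [Real.exp_add, Real.exp_sub, Real.exp_log hq0, Real.exp_log hp0]
  rw [key0]
  exact Real.exp_le_exp.2 hlog

theorem stmt14 (K0 T : ℝ) (hK0 : 0 < K0) (hT : 0 < T) (hT' : T ≤ 1 / (4 * K0^2))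
    (y1 y2 b1 b2 : ℝ → ℝ)
    (hb1 : ∀ t ∈ Set.Ico (0:ℝ) T, |b1 t| ≤ K0)
    (hb2 : ∀ t ∈ Set.Ico (0:ℝ) T, |b2 t| ≤ K0)
    (hbnd1 : ∀ t ∈ Set.Ico (0:ℝ) T, 1 - 1 / (2 * K0) < y1 t ∧ y1 t < 1)
    (hbnd2 : ∀ t ∈ Set.Ico (0:ℝ) T, 1 - 1 / (2 * K0) < y2 t ∧ y2 t < 1)
    (hderiv1 : ∀ t ∈ Set.Ico (0:ℝ) T, HasDerivAt y1 (1 / (1 - y2 t) + b1 t) t)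
    (hderiv2 : ∀ t ∈ Set.Ico (0:ℝ) T, HasDerivAt y2 (1 / (1 - y1 t) + b2 t) t)
    (hint1 : ∀ t ∈ Set.Ico (0:ℝ) T, (∫ τ in (0:ℝ)..t, (1 - y1 τ)⁻¹) ≤ 3 / (4 * K0))
    (hint2 : ∀ t ∈ Set.Ico (0:ℝ) T, (∫ τ in (0:ℝ)..t, (1 - y2 τ)⁻¹) ≤ 3 / (4 * K0)) :
    ∀ t ∈ Set.Ico (0:ℝ) T,
      (1 - y2 t) / (1 - y1 t) ≤ (1 - y2 0) / (1 - y1 0) * Real.exp (3/2) ∧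
      (1 - y1 t) / (1 - y2 t) ≤ (1 - y1 0) / (1 - y2 0) * Real.exp (3/2) := by
  have hpos1 : ∀ t ∈ Set.Ico (0:ℝ) T, 0 < 1 - y1 t := fun t ht => by
    linarith [(hbnd1 t ht).2]
  have hpos2 : ∀ t ∈ Set.Ico (0:ℝ) T, 0 < 1 - y2 t := fun t ht => by
    linarith [(hbnd2 t ht).2]
  intro t ht
  constructor
  · exact aux14 K0 T hK0 hT y1 y2 b1 b2 hb1 hb2 hpos1 hpos2 hderiv1 hderiv2 hint1 hint2 t ht
  · exact aux14 K0 T hK0 hT y2 y1 b2 b1 hb2 hb1 hpos2 hpos1 hderiv2 hderiv1 hint2 hint1 t ht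
end
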